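/- Let (X,+) be an Abelian Polish group and let {I_n : n ∈ ω} be a countable family of pairwise distinct σ-ideals on X, each a proper translation-invariant σ-ideal with Borel base containing all singletons which is maximal among proper translation-invariant σ-ideals with Borel base on X. Then for each n ∈ ω, the σ-ideal I_n is orthogonal to ⋂_{k ∈ ω, k≠n} I_k: there exists a set A ⊆ X with A ∈ I_n and X\A ∈ I_k for every k ∈ ω with k ≠ n. -/

import Mathlib

open scoped Pointwise

/-- A proper translation-invariant σ-ideal with Borel base containing all singletons. -/
def IsInvariantIdeal {X : Type*} [AddCommGroup X] [MeasurableSpace X]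
    (I : Set (Set X)) : Prop :=
  (∀ x : X, {x} ∈ I) ∧
  (∀ A ∈ I, ∀ B : Set X, B ⊆ A → B ∈ I) ∧
  (∀ f : ℕ → Set X, (∀ n, f n ∈ I) → (⋃ n, f n) ∈ I) ∧
  (∀ A ∈ I, ∃ B : Set X, MeasurableSet B ∧ A ⊆ B ∧ B ∈ I) ∧
  (Set.univ ∉ I) ∧
  (∀ A ∈ I, ∀ x : X, (fun a => x + a) '' A ∈ I)

/-- `I` is maximal among proper translation-invariant σ-ideals with Borel base. -/
def IsMaximalInvariantIdeal {X : Type*} [AddCommGroup X] [MeasurableSpace X]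
    (I : Set (Set X)) : Prop :=
  IsInvariantIdeal I ∧ ∀ J : Set (Set X), IsInvariantIdeal J → I ⊆ J → I = J

lemma InvariantIdeal.empty_mem {X : Type*} [AddCommGroup X] [MeasurableSpace X]
    {I : Set (Set X)} (hI : IsInvariantIdeal I) : ∅ ∈ I :=
  hI.2.1 {0} (hI.1 0) ∅ (Set.empty_subset _)

/-- Two distinct maximal invariant ideals are orthogonal. -/
lemma maximal_pair_orthogonal {X : Type*} [AddCommGroup X] [MeasurableSpace X]
    {I J : Set (Set X)} (hI : IsMaximalInvariantIdeal I) (hJ : IsMaximalInvariantIdeal J)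
    (hne : I ≠ J) : ∃ A : Set X, A ∈ I ∧ Aᶜ ∈ J := by
  set K : Set (Set X) := {S | ∃ A ∈ I, ∃ B ∈ J, S ⊆ A ∪ B} with hK
  by_cases huniv : Set.univ ∈ K
  · obtain ⟨A, hA, B, hB, hsub⟩ := huniv
    refine ⟨A, hA, hJ.1.2.1 B hB Aᶜ ?_⟩
    intro x hx
    rcases hsub (Set.mem_univ x) with h | h
    · exact absurd h hx
    · exact h
  · exfalso
    have hKinv : IsInvariantIdeal K := by
      refine ⟨?_, ?_, ?_, ?_, huniv, ?_⟩
      · intro x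
        exact ⟨{x}, hI.1.1 x, ∅, InvariantIdeal.empty_mem hJ.1, by simp⟩
      · rintro S ⟨A, hA, B, hB, hsub⟩ T hT
        exact ⟨A, hA, B, hB, hT.trans hsub⟩
      · intro f hf
        choose A hA B hB hsub using hf
        refine ⟨⋃ n, A n, hI.1.2.2.1 A hA, ⋃ n, B n, hJ.1.2.2.1 B hB, ?_⟩
        intro x hx
        rcases Set.mem_iUnion.1 hx with ⟨n, hn⟩
        rcases hsub n hn with h | h
        · exact Or.inl (Set.mem_iUnion.2 ⟨n, h⟩)
        · exact Or.inr (Set.mem_iUnion.2 ⟨n, h⟩)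
      · rintro S ⟨A, hA, B, hB, hsub⟩
        obtain ⟨A', hA'm, hAA', hA'⟩ := hI.1.2.2.2.1 A hA
        obtain ⟨B', hB'm, hBB', hB'⟩ := hJ.1.2.2.2.1 B hB
        exact ⟨A' ∪ B', hA'm.union hB'm,
          hsub.trans (Set.union_subset_union hAA' hBB'),
          A', hA', B', hB', subset_rfl⟩
      · rintro S ⟨A, hA, B, hB, hsub⟩ x
        refine ⟨(fun a => x + a) '' A, hI.1.2.2.2.2.2 A hA x,
          (fun a => x + a) '' B, hJ.1.2.2.2.2.2 B hB x, ?_⟩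
        rw [← Set.image_union]
        exact Set.image_mono hsub
    have hIK : I ⊆ K := fun A hA =>
      ⟨A, hA, ∅, InvariantIdeal.empty_mem hJ.1, by simp⟩
    have hJK : J ⊆ K := fun B hB =>
      ⟨∅, InvariantIdeal.empty_mem hI.1, B, hB, by simp⟩
    exact hne ((hI.2 K hKinv hIK).trans (hJ.2 K hKinv hJK).symm)

/-- given countably many pairwise distinct maximal invariant σ-ideals with
Borel bases, each one is orthogonal to the intersection of all the others. -/
theorem maximal_invariant_ideals_orthogonal
    {X : Type*} [TopologicalSpace X] [PolishSpace X] [AddCommGroup X]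
    [IsTopologicalAddGroup X] [MeasurableSpace X] [BorelSpace X]
    (I : ℕ → Set (Set X))
    (hmax : ∀ n, IsMaximalInvariantIdeal (I n))
    (hdist : ∀ m n : ℕ, m ≠ n → I m ≠ I n) :
    ∀ n : ℕ, ∃ A : Set X, A ∈ I n ∧ ∀ k : ℕ, k ≠ n → Aᶜ ∈ I k := by
  intro n
  have hchoice : ∀ k : ℕ, ∃ A : Set X, A ∈ I n ∧ (k ≠ n → Aᶜ ∈ I k) := by
    intro k
    by_cases hk : k = n
    · exact ⟨∅, InvariantIdeal.empty_mem (hmax n).1, fun h => absurd hk h⟩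
    · obtain ⟨A, hA, hAc⟩ :=
        maximal_pair_orthogonal (hmax n) (hmax k) (hdist n k (Ne.symm hk))
      exact ⟨A, hA, fun _ => hAc⟩
  choose A hA hAc using hchoice
  refine ⟨⋃ k, A k, (hmax n).1.2.2.1 A hA, fun k hk => ?_⟩
  exact (hmax k).1.2.1 (A k)ᶜ (hAc k hk) _ (Set.compl_subset_compl.2 (Set.subset_iUnion A k))
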